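/- arXiv:2203.12895 — 3 statements merged into one kernel-verified Lean document; each statement's English description precedes it below -/
import Mathlib

section
/- Let α be a positive integer, 0 < p = 1 - q < 1, z ≥ 0, and let g_z be the solution of the binomial Stein equation (g_z(0) = 0, g_z(k) = -∑_{j=k}^{α} [(α-k)!/(α-j)!]·[(k-1)!/j!]·(p/q)^{j-k}·[(j-z)^+ - E(B_{α,p}-z)^+] for 1 ≤ k ≤ α, g_z(α+1) = 0). Then |Δg_z(k)| ≤ 2q^{1-α} for all 0 ≤ k ≤ α, where Δg_z(k) = g_z(k+1) - g_z(k). -/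
open Finset

/-- `E[(B_{α,p} - z)^+]`, the expected call function of a binomial random variable
`B_{α,p}` with `P(B = j) = C(α,j) p^j (1-p)^{α-j}` for `j = 0,…,α`. -/
noncomputable def binomCallExp (α : ℕ) (p z : ℝ) : ℝ :=
  ∑ j ∈ Finset.range (α + 1),
    (α.choose j : ℝ) * p ^ j * (1 - p) ^ (α - j) * max ((j : ℝ) - z) 0

/-- `h₁(k) = ∑_{j=k}^{α} [(α-k)!/(α-j)!]·[(k-1)!/j!]·(p/q)^{j-k}·(j-z)^+` with `q = 1 - p`. -/
noncomputable def h1 (α : ℕ) (p z : ℝ) (k : ℕ) : ℝ :=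
  ∑ j ∈ Finset.Icc k α,
    ((α - k).factorial : ℝ) / ((α - j).factorial : ℝ) *
      (((k - 1).factorial : ℝ) / (j.factorial : ℝ)) *
        (p / (1 - p)) ^ (j - k) * max ((j : ℝ) - z) 0

/-- `h₂(k) = ∑_{j=k}^{α} [(α-k)!/(α-j)!]·[(k-1)!/j!]·(p/q)^{j-k}·E[(B_{α,p}-z)^+]`
with `q = 1 - p`. -/
noncomputable def h2 (α : ℕ) (p z : ℝ) (k : ℕ) : ℝ :=
  ∑ j ∈ Finset.Icc k α,
    ((α - k).factorial : ℝ) / ((α - j).factorial : ℝ) *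
      (((k - 1).factorial : ℝ) / (j.factorial : ℝ)) *
        (p / (1 - p)) ^ (j - k) * binomCallExp α p z

/-- The solution `g_z` of the binomial Stein equation: `g_z(0) = 0`,
`g_z(k) = -∑_{j=k}^{α} [(α-k)!/(α-j)!]·[(k-1)!/j!]·(p/q)^{j-k}·[(j-z)^+ - E(B_{α,p}-z)^+]`
for `1 ≤ k ≤ α`, extended by `g_z(k) = 0` for `k > α` (in particular `g_z(α+1) = 0`). -/
noncomputable def steinSol (α : ℕ) (p z : ℝ) (k : ℕ) : ℝ :=
  if k = 0 ∨ α < k then 0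
  else
    -∑ j ∈ Finset.Icc k α,
      ((α - k).factorial : ℝ) / ((α - j).factorial : ℝ) *
        (((k - 1).factorial : ℝ) / (j.factorial : ℝ)) *
          (p / (1 - p)) ^ (j - k) * (max ((j : ℝ) - z) 0 - binomCallExp α p z)

section SteinAux


noncomputable def bPmf (α : ℕ) (p : ℝ) (j : ℕ) : ℝ :=
  (α.choose j : ℝ) * p ^ j * (1 - p) ^ (α - j)

lemma bPmf_def (α : ℕ) (p : ℝ) (j : ℕ) :
    bPmf α p j = (α.choose j : ℝ) * p ^ j * (1 - p) ^ (α - j) := rfl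

lemma bPmf_nonneg {α : ℕ} {p : ℝ} (hp : 0 ≤ p) (hp1 : p ≤ 1) (j : ℕ) :
    0 ≤ bPmf α p j := by
  unfold bPmf
  have : (0:ℝ) ≤ 1 - p := by linarith
  positivity

lemma sum_bPmf (α : ℕ) (p : ℝ) : ∑ j ∈ range (α + 1), bPmf α p j = 1 := by
  have h := add_pow p (1 - p) α
  simp only [add_sub_cancel, one_pow] at h
  rw [h]
  apply Finset.sum_congr rfl
  intro j _
  unfold bPmf
  ring

lemma sum_shift (k β : ℕ) (hkβ : k ≤ β) (f : ℕ → ℝ) :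
    ∑ m ∈ Icc k β, f (m - k) = ∑ r ∈ range (β - k + 1), f r := by
  have hmap : Icc k β = map ⟨fun r => r + k, add_left_injective k⟩ (range (β - k + 1)) := by
    ext x
    simp only [mem_Icc, mem_map, mem_range, Function.Embedding.coeFn_mk]
    constructor
    · intro ⟨h1, h2⟩; exact ⟨x - k, by omega, by omega⟩
    · rintro ⟨a, ha, rfl⟩; omega
  rw [hmap, sum_map]
  apply Finset.sum_congr rfl
  intro r _
  simp only [Function.Embedding.coeFn_mk]
  congr 1
  omega

lemma tail_le (β k : ℕ) {p : ℝ} (hp : 0 ≤ p) (hp1 : p ≤ 1) :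
    ∑ m ∈ Icc k β, bPmf β p m ≤ (β.choose k : ℝ) * p ^ k := by
  rcases le_or_gt k β with hkβ | hkβ
  · have key : ∀ m ∈ Icc k β, bPmf β p m ≤ (β.choose k : ℝ) * p ^ k * bPmf (β - k) p (m - k) := by
      intro m hm
      rw [mem_Icc] at hm
      obtain ⟨hkm, hmβ⟩ := hm
      have hc : (β.choose m : ℕ) ≤ β.choose k * (β - k).choose (m - k) := by
        calc β.choose m ≤ β.choose m * m.choose k := Nat.le_mul_of_pos_right _ (Nat.choose_pos hkm)
        _ = β.choose k * (β - k).choose (m - k) := Nat.choose_mul (n := β) hkm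
      have hcr : (β.choose m : ℝ) ≤ (β.choose k : ℝ) * ((β - k).choose (m - k) : ℝ) := by
        exact_mod_cast hc
      have hpm : p ^ m = p ^ k * p ^ (m - k) := by
        rw [← pow_add]; congr 1; omega
      have hqr : (β : ℕ) - m = (β - k) - (m - k) := by omega
      unfold bPmf
      rw [hpm, hqr]
      have h1p : (0:ℝ) ≤ 1 - p := by linarith
      nlinarith [mul_le_mul_of_nonneg_right hcr (mul_nonneg (mul_nonneg (pow_nonneg hp k) (pow_nonneg hp (m-k))) (pow_nonneg h1p ((β-k)-(m-k))))]
    calc ∑ m ∈ Icc k β, bPmf β p m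
        ≤ ∑ m ∈ Icc k β, (β.choose k : ℝ) * p ^ k * bPmf (β - k) p (m - k) :=
          Finset.sum_le_sum key
      _ = (β.choose k : ℝ) * p ^ k * ∑ m ∈ Icc k β, bPmf (β - k) p (m - k) := by
          rw [Finset.mul_sum]
      _ = (β.choose k : ℝ) * p ^ k * ∑ r ∈ range (β - k + 1), bPmf (β - k) p r := by
          rw [sum_shift k β hkβ]
      _ = (β.choose k : ℝ) * p ^ k * 1 := by rw [sum_bPmf]
      _ = (β.choose k : ℝ) * p ^ k := by ring
  · rw [Finset.Icc_eq_empty (by omega)]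
    simp
    positivity

-- per-term absorption identity
lemma term_shift {α j : ℕ} (hα : 1 ≤ α) (hj : 1 ≤ j) (p : ℝ) :
    (j : ℝ) * bPmf α p j = (α : ℝ) * p * bPmf (α - 1) p (j - 1) := by
  rcases le_or_gt j α with hjα | hjα
  · have hn : α * (α - 1).choose (j - 1) = α.choose j * j := by
      have := Nat.add_one_mul_choose_eq (α - 1) (j - 1)
      have h1 : α - 1 + 1 = α := by omega
      have h2 : j - 1 + 1 = j := by omega
      rw [h1, h2] at this
      exact this
    have hnr : (α : ℝ) * ((α - 1).choose (j - 1) : ℝ) = (α.choose j : ℝ) * j := by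
      exact_mod_cast hn
    rw [bPmf_def, bPmf_def]
    have hpj : p ^ j = p * p ^ (j - 1) := by
      rw [← pow_succ']; congr 1; omega
    have hsub : α - j = (α - 1) - (j - 1) := by omega
    rw [hpj, hsub]
    linear_combination (-(p * p ^ (j - 1) * (1 - p) ^ (α - 1 - (j - 1)))) * hnr
  · have h1 : α.choose j = 0 := Nat.choose_eq_zero_of_lt hjα
    have h2 : (α - 1).choose (j - 1) = 0 := Nat.choose_eq_zero_of_lt (by omega)
    rw [bPmf_def, bPmf_def, h1, h2]
    simp

lemma cast_id1 {α k : ℕ} (hα : 1 ≤ α) (hk : 1 ≤ k) :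
    (α : ℝ) * ((α - 1).choose (k - 1) : ℝ) = (k : ℝ) * (α.choose k : ℝ) := by
  have hn : α * (α - 1).choose (k - 1) = α.choose k * k := by
    have := Nat.add_one_mul_choose_eq (α - 1) (k - 1)
    have h1 : α - 1 + 1 = α := by omega
    have h2 : k - 1 + 1 = k := by omega
    rw [h1, h2] at this
    exact this
  have : (α : ℝ) * ((α - 1).choose (k - 1) : ℝ) = (α.choose k : ℝ) * k := by exact_mod_cast hn
  linarith

lemma KI {α k : ℕ} {p : ℝ} (hα : 1 ≤ α) (hk : 1 ≤ k) (hp : 0 ≤ p) (hp1 : p ≤ 1) :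
    ∑ j ∈ Icc k α, (j : ℝ) * bPmf α p j ≤ (k : ℝ) * (α.choose k : ℝ) * p ^ k := by
  rcases le_or_gt k α with hkα | hkα
  · have step1 : ∑ j ∈ Icc k α, (j : ℝ) * bPmf α p j
        = (α : ℝ) * p * ∑ j ∈ Icc k α, bPmf (α - 1) p (j - 1) := by
      rw [Finset.mul_sum]
      apply Finset.sum_congr rfl
      intro j hj
      rw [mem_Icc] at hj
      exact term_shift hα (le_trans hk hj.1) p
    have step2 : ∑ j ∈ Icc k α, bPmf (α - 1) p (j - 1)
        = ∑ m ∈ Icc (k - 1) (α - 1), bPmf (α - 1) p m := by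
      have e1 : ∑ j ∈ Icc k α, bPmf (α - 1) p (j - 1)
          = ∑ j ∈ Icc k α, (fun r => bPmf (α - 1) p (r + (k - 1))) (j - k) := by
        apply Finset.sum_congr rfl
        intro j hj
        rw [mem_Icc] at hj
        congr 1
        omega
      have e2 : ∑ m ∈ Icc (k - 1) (α - 1), bPmf (α - 1) p m
          = ∑ m ∈ Icc (k - 1) (α - 1), (fun r => bPmf (α - 1) p (r + (k - 1))) (m - (k - 1)) := by
        apply Finset.sum_congr rfl
        intro m hm
        rw [mem_Icc] at hm
        congr 1
        omega
      rw [e1, e2, sum_shift k α hkα (fun r => bPmf (α - 1) p (r + (k - 1))),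
        sum_shift (k - 1) (α - 1) (by omega) (fun r => bPmf (α - 1) p (r + (k - 1)))]
      have : α - k = (α - 1) - (k - 1) := by omega
      rw [this]
    have step3 : ∑ m ∈ Icc (k - 1) (α - 1), bPmf (α - 1) p m
        ≤ ((α - 1).choose (k - 1) : ℝ) * p ^ (k - 1) := tail_le (α - 1) (k - 1) hp hp1
    rw [step1, step2]
    have hap : (0:ℝ) ≤ (α : ℝ) * p := by positivity
    calc (α : ℝ) * p * ∑ m ∈ Icc (k - 1) (α - 1), bPmf (α - 1) p m
        ≤ (α : ℝ) * p * (((α - 1).choose (k - 1) : ℝ) * p ^ (k - 1)) :=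
          mul_le_mul_of_nonneg_left step3 hap
      _ = ((α : ℝ) * ((α - 1).choose (k - 1) : ℝ)) * (p * p ^ (k - 1)) := by ring
      _ = (k : ℝ) * (α.choose k : ℝ) * p ^ k := by
          rw [cast_id1 hα hk, ← pow_succ']
          congr 2
          omega
  · rw [Finset.Icc_eq_empty (by omega)]
    simp
    positivity

lemma mean_eq {α : ℕ} {p : ℝ} (hα : 1 ≤ α) :
    ∑ i ∈ range (α + 1), (i : ℝ) * bPmf α p i = (α : ℝ) * p := by
  rw [Finset.sum_range_succ']
  simp only [Nat.cast_zero, zero_mul, add_zero]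
  have : ∀ i ∈ range α, (((i + 1 : ℕ)) : ℝ) * bPmf α p (i + 1) = (α : ℝ) * p * bPmf (α - 1) p i := by
    intro i _
    have h := term_shift hα (Nat.le_add_left 1 i) p
    simp only [Nat.add_sub_cancel] at h
    rw [← h]
  calc ∑ i ∈ range α, (((i + 1 : ℕ)) : ℝ) * bPmf α p (i + 1)
      = ∑ i ∈ range α, (α : ℝ) * p * bPmf (α - 1) p i := Finset.sum_congr rfl this
    _ = (α : ℝ) * p * ∑ i ∈ range ((α - 1) + 1), bPmf (α - 1) p i := by
        rw [← Finset.mul_sum, show (α - 1) + 1 = α from by omega]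
    _ = (α : ℝ) * p := by rw [sum_bPmf]; ring

noncomputable def bV (α : ℕ) (p : ℝ) (j : ℕ) : ℝ :=
  ∑ i ∈ range (α + 1), bPmf α p i * max ((i : ℝ) - (j : ℝ)) 0

lemma binomCallExp_eq (α : ℕ) (p z : ℝ) :
    binomCallExp α p z = ∑ j ∈ range (α + 1), bPmf α p j * max ((j : ℝ) - z) 0 := by
  unfold binomCallExp
  apply Finset.sum_congr rfl
  intro j _
  rw [bPmf_def]

lemma E_nonneg {α : ℕ} {p z : ℝ} (hp : 0 ≤ p) (hp1 : p ≤ 1) : 0 ≤ binomCallExp α p z := by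
  rw [binomCallExp_eq]
  apply Finset.sum_nonneg
  intro i _
  exact mul_nonneg (bPmf_nonneg hp hp1 i) (le_max_right _ _)

lemma E_ge {α : ℕ} {p z : ℝ} (hα : 1 ≤ α) (hp : 0 ≤ p) (hp1 : p ≤ 1) :
    (α : ℝ) * p - z ≤ binomCallExp α p z := by
  rw [binomCallExp_eq]
  have h1 : ∑ i ∈ range (α + 1), ((i : ℝ) * bPmf α p i - z * bPmf α p i)
      ≤ ∑ i ∈ range (α + 1), bPmf α p i * max ((i : ℝ) - z) 0 := by
    apply Finset.sum_le_sum
    intro i _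
    have h2 : (i : ℝ) - z ≤ max ((i : ℝ) - z) 0 := le_max_left _ _
    nlinarith [bPmf_nonneg (α := α) (p := p) hp hp1 i]
  rw [Finset.sum_sub_distrib, ← Finset.mul_sum, mean_eq hα, sum_bPmf] at h1
  linarith

lemma d_le {α j : ℕ} {p z : ℝ} (hα : 1 ≤ α) (hj : j ≤ α) (hp : 0 ≤ p) (hp1 : p ≤ 1) :
    max ((j : ℝ) - z) 0 - binomCallExp α p z ≤ (1 - p) * j := by
  have hE0 := E_nonneg (α := α) (z := z) hp hp1
  have hEg := E_ge (α := α) (z := z) hα hp hp1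
  have hjα : (j : ℝ) ≤ (α : ℝ) := by exact_mod_cast hj
  have hjp : (j : ℝ) * p ≤ (α : ℝ) * p := mul_le_mul_of_nonneg_right hjα hp
  rcases le_total z (j : ℝ) with h | h
  · rw [max_eq_left (by linarith)]
    linarith
  · rw [max_eq_right (by linarith)]
    have : (0:ℝ) ≤ (1 - p) * j := mul_nonneg (by linarith) (Nat.cast_nonneg j)
    linarith

lemma max_sub_max_le (a b z : ℝ) : max (a - z) 0 - max (b - z) 0 ≤ max (a - b) 0 := by
  rcases le_total a z with h | h
  · have h1 : max (a - z) 0 = 0 := max_eq_right (by linarith)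
    rw [h1]
    have := le_max_right (b - z) (0:ℝ)
    have := le_max_right (a - b) (0:ℝ)
    linarith
  · have h1 : max (a - z) 0 = a - z := max_eq_left (by linarith)
    rw [h1]
    have := le_max_left (b - z) (0:ℝ)
    have := le_max_left (a - b) (0:ℝ)
    linarith

lemma negd_le {α j : ℕ} {p z : ℝ} (hp : 0 ≤ p) (hp1 : p ≤ 1) :
    binomCallExp α p z - max ((j : ℝ) - z) 0 ≤ bV α p j := by
  rw [binomCallExp_eq]
  have h0 : max ((j : ℝ) - z) 0 = (∑ i ∈ range (α + 1), bPmf α p i) * max ((j : ℝ) - z) 0 := by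
    rw [sum_bPmf, one_mul]
  rw [h0, Finset.sum_mul, ← Finset.sum_sub_distrib]
  unfold bV
  apply Finset.sum_le_sum
  intro i _
  rw [← mul_sub]
  exact mul_le_mul_of_nonneg_left (max_sub_max_le _ _ _) (bPmf_nonneg hp hp1 i)

lemma bV_nonneg {α j : ℕ} {p : ℝ} (hp : 0 ≤ p) (hp1 : p ≤ 1) : 0 ≤ bV α p j := by
  apply Finset.sum_nonneg
  intro i _
  exact mul_nonneg (bPmf_nonneg hp hp1 i) (le_max_right _ _)

lemma bV_le_ap {α j : ℕ} {p : ℝ} (hα : 1 ≤ α) (hp : 0 ≤ p) (hp1 : p ≤ 1) :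
    bV α p j ≤ (α : ℝ) * p := by
  rw [← mean_eq (α := α) (p := p) hα]
  apply Finset.sum_le_sum
  intro i _
  have h1 : max ((i : ℝ) - (j : ℝ)) 0 ≤ (i : ℝ) := by
    apply max_le _ (Nat.cast_nonneg i)
    have : (0:ℝ) ≤ (j : ℝ) := Nat.cast_nonneg j
    linarith
  calc bPmf α p i * max ((i : ℝ) - (j : ℝ)) 0 ≤ bPmf α p i * (i : ℝ) :=
        mul_le_mul_of_nonneg_left h1 (bPmf_nonneg hp hp1 i)
    _ = (i : ℝ) * bPmf α p i := by ring

lemma bV_anti {α j k : ℕ} {p : ℝ} (hp : 0 ≤ p) (hp1 : p ≤ 1) (hkj : k ≤ j) :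
    bV α p j ≤ bV α p k := by
  apply Finset.sum_le_sum
  intro i _
  apply mul_le_mul_of_nonneg_left _ (bPmf_nonneg hp hp1 i)
  apply max_le_max _ le_rfl
  have : (k : ℝ) ≤ (j : ℝ) := by exact_mod_cast hkj
  linarith

lemma bV_le2 {α k : ℕ} {p : ℝ} (hα : 1 ≤ α) (hp : 0 ≤ p) (hp1 : p ≤ 1) :
    bV α p k ≤ ((k : ℝ) + 1) * (α.choose (k + 1) : ℝ) * p ^ (k + 1) := by
  have hsub : Icc (k + 1) α ⊆ range (α + 1) := by
    intro x hx
    rw [mem_Icc] at hx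
    rw [mem_range]
    omega
  have hzero : ∀ x ∈ range (α + 1), x ∉ Icc (k + 1) α →
      bPmf α p x * max ((x : ℝ) - (k : ℝ)) 0 = 0 := by
    intro x hx hnx
    rw [mem_range] at hx
    rw [mem_Icc] at hnx
    have hxk : x ≤ k := by omega
    have : max ((x : ℝ) - (k : ℝ)) 0 = 0 := by
      apply max_eq_right
      have : (x : ℝ) ≤ (k : ℝ) := by exact_mod_cast hxk
      linarith
    rw [this, mul_zero]
  have step1 : bV α p k = ∑ i ∈ Icc (k + 1) α, bPmf α p i * max ((i : ℝ) - (k : ℝ)) 0 :=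
    (Finset.sum_subset hsub hzero).symm
  have step2 : ∑ i ∈ Icc (k + 1) α, bPmf α p i * max ((i : ℝ) - (k : ℝ)) 0
      ≤ ∑ i ∈ Icc (k + 1) α, (i : ℝ) * bPmf α p i := by
    apply Finset.sum_le_sum
    intro i _
    have h1 : max ((i : ℝ) - (k : ℝ)) 0 ≤ (i : ℝ) := by
      apply max_le _ (Nat.cast_nonneg i)
      have : (0:ℝ) ≤ (k : ℝ) := Nat.cast_nonneg k
      linarith
    calc bPmf α p i * max ((i : ℝ) - (k : ℝ)) 0 ≤ bPmf α p i * (i : ℝ) :=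
          mul_le_mul_of_nonneg_left h1 (bPmf_nonneg hp hp1 i)
      _ = (i : ℝ) * bPmf α p i := by ring
  have step3 := KI (α := α) (k := k + 1) (p := p) hα (by omega) hp hp1
  rw [step1]
  calc ∑ i ∈ Icc (k + 1) α, bPmf α p i * max ((i : ℝ) - (k : ℝ)) 0
      ≤ ∑ i ∈ Icc (k + 1) α, (i : ℝ) * bPmf α p i := step2
    _ ≤ ((k + 1 : ℕ) : ℝ) * (α.choose (k + 1) : ℝ) * p ^ (k + 1) := step3
    _ = ((k : ℝ) + 1) * (α.choose (k + 1) : ℝ) * p ^ (k + 1) := by push_cast; ring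

lemma PROD {α : ℕ} {p : ℝ} (hp : 0 ≤ p) : ∀ k : ℕ, 1 ≤ k → k ≤ α →
    (k : ℝ) ≤ ((α - k : ℕ) : ℝ) * p → (α : ℝ) * p ≤ (k : ℝ) * (α.choose k : ℝ) * p ^ k := by
  intro k hk1
  induction k, hk1 using Nat.le_induction with
  | base =>
    intro _ _
    simp [Nat.choose_one_right]
  | succ n hn ih =>
    intro hsucc_le hcond
    have hnα : n ≤ α := by omega
    have hcast : ((α - (n + 1) : ℕ) : ℝ) ≤ ((α - n : ℕ) : ℝ) := by
      have : (α - (n + 1) : ℕ) ≤ (α - n : ℕ) := by omega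
      exact_mod_cast this
    have hcondn : (n : ℝ) ≤ ((α - n : ℕ) : ℝ) * p := by
      have h1 : (n : ℝ) ≤ (n : ℝ) + 1 := by linarith
      have h2 : ((α - (n + 1) : ℕ) : ℝ) * p ≤ ((α - n : ℕ) : ℝ) * p :=
        mul_le_mul_of_nonneg_right hcast hp
      push_cast at hcond ⊢
      linarith
    have hih := ih hnα hcondn
    have hid : ((n : ℝ) + 1) * (α.choose (n + 1) : ℝ) = ((α - n : ℕ) : ℝ) * (α.choose n : ℝ) := by
      have := Nat.choose_succ_right_eq α n
      have h2 : (α.choose (n + 1) * (n + 1) : ℕ) = (α.choose n * (α - n) : ℕ) := this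
      have h3 : ((α.choose (n + 1) : ℝ)) * ((n : ℝ) + 1) = (α.choose n : ℝ) * ((α - n : ℕ) : ℝ) := by
        exact_mod_cast h2
      linarith
    have hCn : (0:ℝ) ≤ (α.choose n : ℝ) * p ^ n := by positivity
    have key : (n : ℝ) * (α.choose n : ℝ) * p ^ n
        ≤ (((α - n : ℕ) : ℝ) * p) * ((α.choose n : ℝ) * p ^ n) := by
      have := mul_le_mul_of_nonneg_right hcondn hCn
      nlinarith
    calc (α : ℝ) * p ≤ (n : ℝ) * (α.choose n : ℝ) * p ^ n := hih
      _ ≤ (((α - n : ℕ) : ℝ) * p) * ((α.choose n : ℝ) * p ^ n) := key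
      _ = (((α - n : ℕ) : ℝ) * (α.choose n : ℝ)) * p ^ (n + 1) := by ring
      _ = ((n : ℝ) + 1) * (α.choose (n + 1) : ℝ) * p ^ (n + 1) := by rw [hid]
      _ = (((n + 1 : ℕ)) : ℝ) * (α.choose (n + 1) : ℝ) * p ^ (n + 1) := by push_cast; ring

lemma choose_succ_cast {α k : ℕ} :
    ((k : ℝ) + 1) * (α.choose (k + 1) : ℝ) = ((α - k : ℕ) : ℝ) * (α.choose k : ℝ) := by
  have h2 : (α.choose (k + 1) * (k + 1) : ℕ) = (α.choose k * (α - k) : ℕ) :=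
    Nat.choose_succ_right_eq α k
  have h3 : ((α.choose (k + 1) : ℝ)) * ((k : ℝ) + 1) = (α.choose k : ℝ) * ((α - k : ℕ) : ℝ) := by
    exact_mod_cast h2
  linarith

lemma Sbound {α k : ℕ} {p z : ℝ} (hα : 1 ≤ α) (hk : 1 ≤ k) (hkα : k ≤ α)
    (hp : 0 < p) (hp1 : p < 1) :
    |∑ j ∈ Icc k α, bPmf α p j * (max ((j : ℝ) - z) 0 - binomCallExp α p z)|
      ≤ (k : ℝ) * (α.choose k : ℝ) * p ^ k := by
  have hp0 : (0:ℝ) ≤ p := le_of_lt hp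
  have hp1' : p ≤ 1 := le_of_lt hp1
  have hR0 : (0:ℝ) ≤ (k : ℝ) * (α.choose k : ℝ) * p ^ k := by positivity
  have hsumIcc : ∑ j ∈ Icc k α, bPmf α p j ≤ 1 := by
    rw [← sum_bPmf α p]
    apply Finset.sum_le_sum_of_subset_of_nonneg
    · intro x hx
      rw [mem_Icc] at hx
      rw [mem_range]
      omega
    · intro i _ _
      exact bPmf_nonneg hp0 hp1' i
  rw [abs_le]
  constructor
  · -- lower bound: -(R) ≤ S, i.e. ∑ bPmf_j (E - d_j) ≤ R
    rw [neg_le]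
    have key : ∑ j ∈ Icc k α, bPmf α p j * (binomCallExp α p z - max ((j : ℝ) - z) 0)
        ≤ (k : ℝ) * (α.choose k : ℝ) * p ^ k := by
      have step1 : ∑ j ∈ Icc k α, bPmf α p j * (binomCallExp α p z - max ((j : ℝ) - z) 0)
          ≤ ∑ j ∈ Icc k α, bPmf α p j * bV α p j := by
        apply Finset.sum_le_sum
        intro j _
        exact mul_le_mul_of_nonneg_left (negd_le hp0 hp1') (bPmf_nonneg hp0 hp1' j)
      rcases le_or_gt (((α - k : ℕ) : ℝ) * p) (k : ℝ) with hA | hB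
      · -- case A
        have step2 : ∑ j ∈ Icc k α, bPmf α p j * bV α p j
            ≤ ∑ j ∈ Icc k α, bPmf α p j * bV α p k := by
          apply Finset.sum_le_sum
          intro j hj
          rw [mem_Icc] at hj
          exact mul_le_mul_of_nonneg_left (bV_anti hp0 hp1' hj.1) (bPmf_nonneg hp0 hp1' j)
        have step3 : ∑ j ∈ Icc k α, bPmf α p j * bV α p k
            = (∑ j ∈ Icc k α, bPmf α p j) * bV α p k := by
          rw [Finset.sum_mul]
        have step4 : (∑ j ∈ Icc k α, bPmf α p j) * bV α p k ≤ bV α p k := by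
          have := bV_nonneg (α := α) (j := k) (p := p) hp0 hp1'
          nlinarith
        have step5 : bV α p k ≤ ((α - k : ℕ) : ℝ) * (α.choose k : ℝ) * p ^ (k + 1) := by
          calc bV α p k ≤ ((k : ℝ) + 1) * (α.choose (k + 1) : ℝ) * p ^ (k + 1) :=
                bV_le2 hα hp0 hp1'
            _ = ((α - k : ℕ) : ℝ) * (α.choose k : ℝ) * p ^ (k + 1) := by
                rw [choose_succ_cast]
        have step6 : ((α - k : ℕ) : ℝ) * (α.choose k : ℝ) * p ^ (k + 1)
            ≤ (k : ℝ) * (α.choose k : ℝ) * p ^ k := by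
          have hC : (0:ℝ) ≤ (α.choose k : ℝ) * p ^ k := by positivity
          have : ((α - k : ℕ) : ℝ) * (α.choose k : ℝ) * p ^ (k + 1)
              = (((α - k : ℕ) : ℝ) * p) * ((α.choose k : ℝ) * p ^ k) := by ring
          rw [this]
          have h2 := mul_le_mul_of_nonneg_right hA hC
          calc (((α - k : ℕ) : ℝ) * p) * ((α.choose k : ℝ) * p ^ k)
              ≤ (k : ℝ) * ((α.choose k : ℝ) * p ^ k) := h2
            _ = (k : ℝ) * (α.choose k : ℝ) * p ^ k := by ring
        linarith
      · -- case B
        have step2 : ∑ j ∈ Icc k α, bPmf α p j * bV α p j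
            ≤ ∑ j ∈ Icc k α, bPmf α p j * ((α : ℝ) * p) := by
          apply Finset.sum_le_sum
          intro j _
          exact mul_le_mul_of_nonneg_left (bV_le_ap hα hp0 hp1') (bPmf_nonneg hp0 hp1' j)
        have step3 : ∑ j ∈ Icc k α, bPmf α p j * ((α : ℝ) * p)
            = (∑ j ∈ Icc k α, bPmf α p j) * ((α : ℝ) * p) := by
          rw [Finset.sum_mul]
        have hap : (0:ℝ) ≤ (α : ℝ) * p := by positivity
        have step4 : (∑ j ∈ Icc k α, bPmf α p j) * ((α : ℝ) * p) ≤ (α : ℝ) * p := by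
          nlinarith
        have step5 := PROD (α := α) hp0 k hk hkα (le_of_lt hB)
        linarith
    have : -∑ j ∈ Icc k α, bPmf α p j * (max ((j : ℝ) - z) 0 - binomCallExp α p z)
        = ∑ j ∈ Icc k α, bPmf α p j * (binomCallExp α p z - max ((j : ℝ) - z) 0) := by
      rw [← Finset.sum_neg_distrib]
      apply Finset.sum_congr rfl
      intro j _
      ring
    rw [this]
    exact key
  · -- upper bound
    have step1 : ∑ j ∈ Icc k α, bPmf α p j * (max ((j : ℝ) - z) 0 - binomCallExp α p z)
        ≤ ∑ j ∈ Icc k α, (1 - p) * ((j : ℝ) * bPmf α p j) := by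
      apply Finset.sum_le_sum
      intro j hj
      rw [mem_Icc] at hj
      have := mul_le_mul_of_nonneg_left (d_le (α := α) (z := z) hα hj.2 hp0 hp1') (bPmf_nonneg (α := α) hp0 hp1' j)
      calc bPmf α p j * (max ((j : ℝ) - z) 0 - binomCallExp α p z)
          ≤ bPmf α p j * ((1 - p) * j) := this
        _ = (1 - p) * ((j : ℝ) * bPmf α p j) := by ring
    have step2 : ∑ j ∈ Icc k α, (1 - p) * ((j : ℝ) * bPmf α p j)
        = (1 - p) * ∑ j ∈ Icc k α, (j : ℝ) * bPmf α p j := by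
      rw [Finset.mul_sum]
    have step3 := KI (α := α) (k := k) (p := p) hα hk hp0 hp1'
    have h1p : (0:ℝ) ≤ 1 - p := by linarith
    have hsum_nonneg : (0:ℝ) ≤ ∑ j ∈ Icc k α, (j : ℝ) * bPmf α p j := by
      apply Finset.sum_nonneg
      intro j _
      exact mul_nonneg (Nat.cast_nonneg j) (bPmf_nonneg hp0 hp1' j)
    nlinarith [mul_le_mul_of_nonneg_left step3 h1p]

-- coefficient identity
lemma coeff_eq {α k j : ℕ} {p : ℝ} (hk : 1 ≤ k) (hkj : k ≤ j) (hjα : j ≤ α)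
    (hp : 0 < p) (hp1 : p < 1) :
    ((α - k).factorial : ℝ) / ((α - j).factorial : ℝ) *
        (((k - 1).factorial : ℝ) / (j.factorial : ℝ)) * (p / (1 - p)) ^ (j - k)
      = bPmf α p j / ((k : ℝ) * (α.choose k : ℝ) * p ^ k * (1 - p) ^ (α - k)) := by
  have hq : (0:ℝ) < 1 - p := by linarith
  have hkα : k ≤ α := le_trans hkj hjα
  have hD : ((k : ℝ) * (α.choose k : ℝ) * p ^ k * (1 - p) ^ (α - k)) ≠ 0 := by
    have h1 : (0:ℝ) < (k : ℝ) := by exact_mod_cast hk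
    have h2 : (0:ℝ) < (α.choose k : ℝ) := by exact_mod_cast Nat.choose_pos hkα
    positivity
  rw [eq_div_iff hD]
  -- factorial identities
  have hA : ((α - k).factorial : ℝ) * ((k - 1).factorial : ℝ) * ((k : ℝ) * (α.choose k : ℝ))
      = (α.factorial : ℝ) := by
    have h1 : k * (k - 1).factorial = k.factorial := by
      cases k with
      | zero => omega
      | succ n => simp [Nat.factorial_succ]
    have h2 : α.choose k * k.factorial * (α - k).factorial = α.factorial :=
      Nat.choose_mul_factorial_mul_factorial hkα
    have : ((α - k).factorial * (k - 1).factorial * (k * α.choose k) : ℕ) = α.factorial := by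
      calc (α - k).factorial * (k - 1).factorial * (k * α.choose k)
          = α.choose k * (k * (k - 1).factorial) * (α - k).factorial := by ring
        _ = α.choose k * k.factorial * (α - k).factorial := by rw [h1]
        _ = α.factorial := h2
    exact_mod_cast this
  have hB : (α.choose j : ℝ) * (j.factorial : ℝ) * ((α - j).factorial : ℝ)
      = (α.factorial : ℝ) := by
    exact_mod_cast Nat.choose_mul_factorial_mul_factorial hjα
  -- power identities
  have e1 : (p / (1 - p)) ^ (j - k) = p ^ (j - k) / (1 - p) ^ (j - k) := div_pow p (1 - p) (j - k)
  have e2 : p ^ (j - k) * p ^ k = p ^ j := by rw [← pow_add]; congr 1; omega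
  have e3 : (1 - p) ^ (α - k) = (1 - p) ^ (j - k) * (1 - p) ^ (α - j) := by
    rw [← pow_add]; congr 1; omega
  rw [bPmf_def, e1, e3]
  have hfj : (j.factorial : ℝ) ≠ 0 := by exact_mod_cast j.factorial_ne_zero
  have hfαj : ((α - j).factorial : ℝ) ≠ 0 := by exact_mod_cast (α - j).factorial_ne_zero
  have hqjk : (1 - p) ^ (j - k) ≠ 0 := by positivity
  field_simp
  linear_combination (p ^ (j - k) * p ^ k) * hA +
    ((α.factorial : ℝ)) * e2 -
    p ^ j * hB

lemma gbound {α : ℕ} {p z : ℝ} (hα : 1 ≤ α) (hp : 0 < p) (hp1 : p < 1) (k : ℕ) :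
    |steinSol α p z k| ≤ (1 / (1 - p)) ^ (α - 1) := by
  have hq : (0:ℝ) < 1 - p := by linarith
  have hone : (1:ℝ) ≤ 1 / (1 - p) := by
    rw [le_div_iff₀ hq]; linarith
  have hbound1 : (1:ℝ) ≤ (1 / (1 - p)) ^ (α - 1) := one_le_pow₀ hone
  unfold steinSol
  split_ifs with h
  · simp only [abs_zero]; linarith
  · push_neg at h
    obtain ⟨hk0, hkα⟩ := h
    have hk : 1 ≤ k := Nat.one_le_iff_ne_zero.mpr hk0
    have hkα' : k ≤ α := hkα
    rw [abs_neg]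
    set D : ℝ := (k : ℝ) * (α.choose k : ℝ) * p ^ k * (1 - p) ^ (α - k) with hD_def
    have hDpos : 0 < D := by
      have h1 : (0:ℝ) < (k : ℝ) := by exact_mod_cast hk
      have h2 : (0:ℝ) < (α.choose k : ℝ) := by exact_mod_cast Nat.choose_pos hkα'
      positivity
    have hsum_eq : ∑ j ∈ Icc k α,
        ((α - k).factorial : ℝ) / ((α - j).factorial : ℝ) *
          (((k - 1).factorial : ℝ) / (j.factorial : ℝ)) *
            (p / (1 - p)) ^ (j - k) * (max ((j : ℝ) - z) 0 - binomCallExp α p z)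
        = (∑ j ∈ Icc k α, bPmf α p j * (max ((j : ℝ) - z) 0 - binomCallExp α p z)) / D := by
      rw [Finset.sum_div]
      apply Finset.sum_congr rfl
      intro j hj
      rw [mem_Icc] at hj
      rw [coeff_eq hk hj.1 hj.2 hp hp1]
      ring
    rw [hsum_eq, abs_div, abs_of_pos hDpos]
    have hS := Sbound (α := α) (k := k) (p := p) (z := z) hα hk hkα' hp hp1
    have step1 : |∑ j ∈ Icc k α, bPmf α p j * (max ((j : ℝ) - z) 0 - binomCallExp α p z)| / D
        ≤ ((k : ℝ) * (α.choose k : ℝ) * p ^ k) / D :=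
      div_le_div_of_nonneg_right hS hDpos.le
    have hR : (k : ℝ) * (α.choose k : ℝ) * p ^ k ≠ 0 := by
      have h1 : (0:ℝ) < (k : ℝ) := by exact_mod_cast hk
      have h2 : (0:ℝ) < (α.choose k : ℝ) := by exact_mod_cast Nat.choose_pos hkα'
      positivity
    have hqk : ((1:ℝ) - p) ^ (α - k) ≠ 0 := by positivity
    have step2 : ((k : ℝ) * (α.choose k : ℝ) * p ^ k) / D = 1 / (1 - p) ^ (α - k) := by
      rw [hD_def]
      have hC : (α.choose k : ℝ) ≠ 0 := by exact_mod_cast (Nat.choose_pos hkα').ne'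
      field_simp
    have step3 : (1:ℝ) / (1 - p) ^ (α - k) = (1 / (1 - p)) ^ (α - k) := by
      rw [one_div, one_div, inv_pow]
    have step4 : (1 / (1 - p)) ^ (α - k) ≤ (1 / (1 - p)) ^ (α - 1) :=
      pow_le_pow_right₀ hone (by omega)
    linarith

end SteinAux

/-- Uniform bound: for `z ≥ 0` and the Stein solution `g_z`,
`|Δg_z(k)| ≤ 2q^{1-α}` for all `0 ≤ k ≤ α`, where `Δg_z(k) = g_z(k+1) - g_z(k)`. -/
theorem steinSol_diff_uniform_bound (α : ℕ) (hα : 0 < α) (p q : ℝ)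
    (hq : q = 1 - p) (hp : 0 < p) (hp1 : p < 1) (z : ℝ) (hz : 0 ≤ z) :
    ∀ k ≤ α, |steinSol α p z (k + 1) - steinSol α p z k| ≤ 2 * q ^ ((1 : ℤ) - (α : ℤ)) := by
  intro k _
  have hα1 : 1 ≤ α := hα
  have hq0 : (0:ℝ) < 1 - p := by linarith
  have g1 := gbound (α := α) (p := p) (z := z) hα1 hp hp1 (k + 1)
  have g2 := gbound (α := α) (p := p) (z := z) hα1 hp hp1 k
  have hzp : q ^ ((1 : ℤ) - (α : ℤ)) = (1 / (1 - p)) ^ (α - 1) := by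
    subst hq
    have h1 : ((1 : ℤ) - (α : ℤ)) = -(((α - 1 : ℕ) : ℤ)) := by omega
    rw [h1, zpow_neg, zpow_natCast, one_div, inv_pow]
  rw [hzp]
  have tri : |steinSol α p z (k + 1) - steinSol α p z k|
      ≤ |steinSol α p z (k + 1)| + |steinSol α p z k| := abs_sub _ _
  linarith
end

section
/- Let α be a positive integer, 0 < p = 1 - q < 1, z ≥ 0, and let g_z be the solution of the binomial Stein equation (g_z(0) = 0, g_z(k) = -∑_{j=k}^{α} [(α-k)!/(α-j)!]·[(k-1)!/j!]·(p/q)^{j-k}·[(j-z)^+ - E(B_{α,p}-z)^+] for 1 ≤ k ≤ α). Then |g_z(k)| ≤ 2q^{k-α} for all 0 ≤ k ≤ α. -/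
open Finset

/-! ### Auxiliary lemmas -/

lemma binom_sum' (n : ℕ) (x y : ℝ) :
    ∑ m ∈ range (n+1), (n.choose m : ℝ) * x ^ m * y ^ (n - m) = (x + y) ^ n := by
  rw [add_pow]; exact Finset.sum_congr rfl fun m _ => by ring

lemma nat_key1 (k j : ℕ) (hk : 1 ≤ k) (hkj : k ≤ j) :
    (k-1).factorial * j * (j-k).factorial ≤ j.factorial := by
  have h := Nat.factorial_mul_factorial_dvd_factorial_add (k-1) (j-k)
  have e : k - 1 + (j - k) = j - 1 := by omega
  rw [e] at h
  have h2 : (k-1).factorial * (j-k).factorial ≤ (j-1).factorial :=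
    Nat.le_of_dvd (Nat.factorial_pos _) h
  calc (k-1).factorial * j * (j-k).factorial
      = j * ((k-1).factorial * (j-k).factorial) := by ring
    _ ≤ j * (j-1).factorial := Nat.mul_le_mul_left _ h2
    _ = j.factorial := by
        conv_rhs => rw [show j = (j-1)+1 by omega]
        rw [Nat.factorial_succ]; congr 1; omega

lemma nat_key2 (α k j : ℕ) (hk : 1 ≤ k) (hkj : k ≤ j) (hjα : j ≤ α) :
    α * (α-k).factorial * (k-1).factorial * (j-k+1).factorial
      ≤ (α-k+1).factorial * j.factorial := by
  have hkj' : k - 1 ≤ j := by omega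
  have hj : j.factorial = j.choose (k-1) * ((k-1).factorial * (j-k+1).factorial) := by
    have := Nat.choose_mul_factorial_mul_factorial hkj'
    have e : j - (k-1) = j - k + 1 := by omega
    rw [e] at this
    rw [← this]; ring
  have hc : k ≤ j.choose (k-1) := by
    have h1 : k.choose (k-1) ≤ j.choose (k-1) := Nat.choose_le_choose _ hkj
    have h2 : k.choose (k-1) = k := by
      have := Nat.choose_symm (show k - 1 ≤ k by omega)
      have e : k - (k-1) = 1 := by omega
      rw [e] at this
      rw [← this, Nat.choose_one_right]
    omega
  have hak : α ≤ (α - k + 1) * j.choose (k-1) := by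
    have h1 : α ≤ (α - k + 1) * k := by
      calc α = (α - k) + k := by omega
        _ ≤ (α - k) * k + k := by
            have := Nat.le_mul_of_pos_right (α - k) hk; omega
        _ = (α - k + 1) * k := by ring
    exact h1.trans (Nat.mul_le_mul_left _ hc)
  rw [Nat.factorial_succ, hj]
  set A := (α-k).factorial with hA
  set B := (k-1).factorial with hB
  set C := (j-k+1).factorial with hC
  set D := j.choose (k-1) with hD
  calc α * A * B * C = α * (A * (B * C)) := by ring
    _ ≤ ((α-k+1) * D) * (A * (B * C)) := Nat.mul_le_mul_right _ hak
    _ = (α - k + 1) * A * (D * (B * C)) := by ring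

lemma real_key1 (α k j : ℕ) (hk : 1 ≤ k) (hkj : k ≤ j) (hjα : j ≤ α) :
    ((α-k).factorial : ℝ) / ((α-j).factorial : ℝ) *
      (((k-1).factorial : ℝ) / (j.factorial : ℝ)) * j ≤ ((α-k).choose (j-k) : ℝ) := by
  have hnat := nat_key1 k j hk hkj
  have hd : j - k ≤ α - k := by omega
  rw [Nat.cast_choose ℝ hd]
  have e : α - k - (j - k) = α - j := by omega
  rw [e]
  rw [div_mul_div_comm, div_mul_eq_mul_div, div_le_div_iff₀ (by positivity) (by positivity)]
  have hcast : ((k-1).factorial : ℝ) * j * ((j-k).factorial : ℝ) ≤ (j.factorial : ℝ) := by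
    exact_mod_cast hnat
  calc ((α-k).factorial : ℝ) * (k-1).factorial * j * ((j-k).factorial * (α-j).factorial)
      = ((α-k).factorial * (α-j).factorial) * ((k-1).factorial * j * (j-k).factorial) := by ring
    _ ≤ ((α-k).factorial * (α-j).factorial) * j.factorial := by
        apply mul_le_mul_of_nonneg_left hcast (by positivity)
    _ = ((α-k).factorial : ℝ) * ((α-j).factorial * j.factorial) := by ring

lemma real_key2 (α k j : ℕ) (hk : 1 ≤ k) (hkj : k ≤ j) (hjα : j ≤ α) :
    ((α-k).factorial : ℝ) / ((α-j).factorial : ℝ) *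
      (((k-1).factorial : ℝ) / (j.factorial : ℝ)) * α ≤ ((α-k+1).choose (j-k+1) : ℝ) := by
  have hnat := nat_key2 α k j hk hkj hjα
  have hd : j - k + 1 ≤ α - k + 1 := by omega
  rw [Nat.cast_choose ℝ hd]
  have e : α - k + 1 - (j - k + 1) = α - j := by omega
  rw [e]
  rw [div_mul_div_comm, div_mul_eq_mul_div, div_le_div_iff₀ (by positivity) (by positivity)]
  have hcast : (α : ℝ) * (α-k).factorial * (k-1).factorial * (j-k+1).factorial
      ≤ ((α-k+1).factorial : ℝ) * j.factorial := by exact_mod_cast hnat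
  calc ((α-k).factorial : ℝ) * (k-1).factorial * α * ((j-k+1).factorial * (α-j).factorial)
      = ((α : ℝ) * (α-k).factorial * (k-1).factorial * (j-k+1).factorial) * (α-j).factorial := by
        ring
    _ ≤ ((α-k+1).factorial : ℝ) * j.factorial * (α-j).factorial := by
        apply mul_le_mul_of_nonneg_right hcast (by positivity)
    _ = ((α-k+1).factorial : ℝ) * ((α-j).factorial * j.factorial) := by ring

lemma binomCallExp_nonneg (α : ℕ) (p z : ℝ) (hp : 0 ≤ p) (hp1 : p ≤ 1) :
    0 ≤ binomCallExp α p z := by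
  apply Finset.sum_nonneg
  intro j _
  have h1 : (0:ℝ) ≤ 1 - p := by linarith
  positivity

lemma binomCallExp_le (α : ℕ) (hα : 0 < α) (p z : ℝ) (hp : 0 ≤ p) (hp1 : p ≤ 1) (hz : 0 ≤ z) :
    binomCallExp α p z ≤ α * p := by
  have h1p : (0:ℝ) ≤ 1 - p := by linarith
  have step1 : binomCallExp α p z ≤
      ∑ j ∈ range (α+1), (α.choose j : ℝ) * p ^ j * (1 - p) ^ (α - j) * j := by
    apply Finset.sum_le_sum
    intro j _
    apply mul_le_mul_of_nonneg_left _ (by positivity)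
    exact max_le (by linarith) (by positivity)
  refine step1.trans_eq ?_
  obtain ⟨β, rfl⟩ : ∃ β, α = β + 1 := ⟨α - 1, by omega⟩
  rw [Finset.sum_range_succ']
  simp only [Nat.cast_zero, mul_zero, add_zero]
  have e : ∀ i ∈ range (β+1), ((β+1).choose (i+1) : ℝ) * p ^ (i+1) * (1-p) ^ (β+1-(i+1)) * ((i+1 : ℕ) : ℝ)
      = ((β+1):ℝ) * p * ((β.choose i : ℝ) * p ^ i * (1-p) ^ (β - i)) := by
    intro i hi
    have hnat : (β+1) * β.choose i = (β+1).choose (i+1) * (i+1) := Nat.add_one_mul_choose_eq β i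
    have hc : ((β+1):ℝ) * (β.choose i : ℝ) = ((β+1).choose (i+1) : ℝ) * ((i:ℝ)+1) := by
      exact_mod_cast hnat
    have e2 : β + 1 - (i+1) = β - i := by omega
    rw [e2]
    push_cast
    linear_combination (-(p ^ (i+1) * (1-p) ^ (β - i))) * hc
  rw [Finset.sum_congr rfl e, ← Finset.mul_sum, binom_sum']
  have : p + (1 - p) = 1 := by ring
  rw [this, one_pow]
  push_cast; ring

lemma h1_le (α k : ℕ) (hk : 1 ≤ k) (hkα : k ≤ α) (p z : ℝ)
    (hp : 0 < p) (hp1 : p < 1) (hz : 0 ≤ z) :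
    h1 α p z k ≤ (1 / (1 - p)) ^ (α - k) := by
  have hq : (0:ℝ) < 1 - p := by linarith
  have step1 : h1 α p z k ≤
      ∑ j ∈ Finset.Icc k α, ((α-k).choose (j-k) : ℝ) * (p / (1-p)) ^ (j-k) := by
    apply Finset.sum_le_sum
    intro j hj
    rw [Finset.mem_Icc] at hj
    obtain ⟨hkj, hjα⟩ := hj
    have hmax : max ((j:ℝ) - z) 0 ≤ (j : ℝ) := max_le (by linarith) (by positivity)
    calc ((α-k).factorial : ℝ) / ((α-j).factorial : ℝ) *
          (((k-1).factorial : ℝ) / (j.factorial : ℝ)) * (p/(1-p)) ^ (j-k) * max ((j:ℝ) - z) 0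
        ≤ ((α-k).factorial : ℝ) / ((α-j).factorial : ℝ) *
          (((k-1).factorial : ℝ) / (j.factorial : ℝ)) * (p/(1-p)) ^ (j-k) * j := by
          apply mul_le_mul_of_nonneg_left hmax (by positivity)
      _ = (((α-k).factorial : ℝ) / ((α-j).factorial : ℝ) *
          (((k-1).factorial : ℝ) / (j.factorial : ℝ)) * j) * (p/(1-p)) ^ (j-k) := by ring
      _ ≤ ((α-k).choose (j-k) : ℝ) * (p/(1-p)) ^ (j-k) := by
          apply mul_le_mul_of_nonneg_right (real_key1 α k j hk hkj hjα) (by positivity)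
  refine step1.trans_eq ?_
  rw [show Finset.Icc k α = Finset.Ico k (α+1) by rw [Finset.Ico_add_one_right_eq_Icc],
    Finset.sum_Ico_eq_sum_range]
  have e1 : α + 1 - k = (α - k) + 1 := by omega
  rw [e1]
  have e : ∀ i ∈ range ((α-k)+1), ((α-k).choose (k+i-k) : ℝ) * (p/(1-p)) ^ (k+i-k)
      = ((α-k).choose i : ℝ) * (p/(1-p)) ^ i * (1:ℝ) ^ ((α-k) - i) := by
    intro i _
    have : k + i - k = i := by omega
    rw [this, one_pow, mul_one]
  rw [Finset.sum_congr rfl e, binom_sum']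
  congr 1
  field_simp; ring

lemma h2_le (α k : ℕ) (hα : 0 < α) (hk : 1 ≤ k) (hkα : k ≤ α) (p z : ℝ)
    (hp : 0 < p) (hp1 : p < 1) (hz : 0 ≤ z) :
    h2 α p z k ≤ (1 / (1 - p)) ^ (α - k) := by
  have hq : (0:ℝ) < 1 - p := by linarith
  have hE : binomCallExp α p z ≤ α * p := binomCallExp_le α hα p z hp.le hp1.le hz
  have step1 : h2 α p z k ≤
      ∑ j ∈ Finset.Icc k α,
        ((α-k+1).choose (j-k+1) : ℝ) * (p / (1-p)) ^ (j-k+1) * (1-p) := by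
    apply Finset.sum_le_sum
    intro j hj
    rw [Finset.mem_Icc] at hj
    obtain ⟨hkj, hjα⟩ := hj
    calc ((α-k).factorial : ℝ) / ((α-j).factorial : ℝ) *
          (((k-1).factorial : ℝ) / (j.factorial : ℝ)) * (p/(1-p)) ^ (j-k) * binomCallExp α p z
        ≤ ((α-k).factorial : ℝ) / ((α-j).factorial : ℝ) *
          (((k-1).factorial : ℝ) / (j.factorial : ℝ)) * (p/(1-p)) ^ (j-k) * ((α:ℝ) * p) := by
          apply mul_le_mul_of_nonneg_left hE (by positivity)
      _ = (((α-k).factorial : ℝ) / ((α-j).factorial : ℝ) *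
          (((k-1).factorial : ℝ) / (j.factorial : ℝ)) * α) * ((p/(1-p)) ^ (j-k) * p) := by ring
      _ ≤ ((α-k+1).choose (j-k+1) : ℝ) * ((p/(1-p)) ^ (j-k) * p) := by
          apply mul_le_mul_of_nonneg_right (real_key2 α k j hk hkj hjα) (by positivity)
      _ = ((α-k+1).choose (j-k+1) : ℝ) * (p/(1-p)) ^ (j-k+1) * (1-p) := by
          rw [pow_succ]
          field_simp
  refine step1.trans ?_
  rw [show Finset.Icc k α = Finset.Ico k (α+1) by rw [Finset.Ico_add_one_right_eq_Icc],
    Finset.sum_Ico_eq_sum_range]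
  have e1 : α + 1 - k = (α - k) + 1 := by omega
  rw [e1]
  have e : ∀ i ∈ range ((α-k)+1),
      ((α-k+1).choose (k+i-k+1) : ℝ) * (p/(1-p)) ^ (k+i-k+1) * (1-p)
      = (((α-k+1).choose (i+1) : ℝ) * (p/(1-p)) ^ (i+1)) * (1-p) := by
    intro i _
    have : k + i - k = i := by omega
    rw [this]
  rw [Finset.sum_congr rfl e, ← Finset.sum_mul]
  have hsum : ∑ i ∈ range ((α-k)+1), ((α-k+1).choose (i+1) : ℝ) * (p/(1-p)) ^ (i+1)
      ≤ (1 / (1-p)) ^ ((α-k)+1) := by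
    have hfull : ∑ m ∈ range ((α-k+1)+1), ((α-k+1).choose m : ℝ) * (p/(1-p)) ^ m * (1:ℝ) ^ ((α-k+1) - m)
        = (p/(1-p) + 1) ^ (α-k+1) := binom_sum' _ _ _
    have hsplit := Finset.sum_range_succ'
      (fun m => ((α-k+1).choose m : ℝ) * (p/(1-p)) ^ m * (1:ℝ) ^ ((α-k+1) - m)) (α-k+1)
    have hval : (p/(1-p) + 1) = 1 / (1-p) := by field_simp; ring
    rw [hsplit, hval] at hfull
    have h0 : (0:ℝ) ≤ ((α-k+1).choose 0 : ℝ) * (p/(1-p)) ^ 0 * (1:ℝ) ^ ((α-k+1) - 0) := by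
      positivity
    have : ∑ i ∈ range ((α-k)+1), ((α-k+1).choose (i+1) : ℝ) * (p/(1-p)) ^ (i+1)
        = ∑ i ∈ range ((α-k)+1),
          ((α-k+1).choose (i+1) : ℝ) * (p/(1-p)) ^ (i+1) * (1:ℝ) ^ ((α-k+1) - (i+1)) := by
      exact Finset.sum_congr rfl fun i _ => by rw [one_pow, mul_one]
    rw [this]
    linarith [hfull]
  calc (∑ i ∈ range ((α-k)+1), ((α-k+1).choose (i+1) : ℝ) * (p/(1-p)) ^ (i+1)) * (1-p)
      ≤ (1 / (1-p)) ^ ((α-k)+1) * (1-p) := by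
        apply mul_le_mul_of_nonneg_right hsum hq.le
    _ = (1 / (1-p)) ^ (α-k) := by
        rw [pow_succ]
        field_simp

lemma h1_nonneg (α k : ℕ) (p z : ℝ) (hp : 0 < p) (hp1 : p < 1) : 0 ≤ h1 α p z k := by
  have hq : (0:ℝ) < 1 - p := by linarith
  apply Finset.sum_nonneg
  intro j _
  have : (0:ℝ) ≤ max ((j:ℝ) - z) 0 := le_max_right _ _
  positivity

lemma h2_nonneg (α k : ℕ) (p z : ℝ) (hp : 0 < p) (hp1 : p < 1) : 0 ≤ h2 α p z k := by
  have hq : (0:ℝ) < 1 - p := by linarith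
  have hE := binomCallExp_nonneg α p z hp.le hp1.le
  apply Finset.sum_nonneg
  intro j _
  positivity

/-- For `z ≥ 0` and the Stein solution `g_z`, `|g_z(k)| ≤ 2q^{k-α}` for all `0 ≤ k ≤ α`. -/
theorem steinSol_bound (α : ℕ) (hα : 0 < α) (p q : ℝ)
    (hq : q = 1 - p) (hp : 0 < p) (hp1 : p < 1) (z : ℝ) (hz : 0 ≤ z) :
    ∀ k ≤ α, |steinSol α p z k| ≤ 2 * q ^ ((k : ℤ) - (α : ℤ)) := by
  subst hq
  have hq0 : (0:ℝ) < 1 - p := by linarith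
  intro k hkα
  have hRHS : (1 - p) ^ ((k : ℤ) - (α : ℤ)) = (1 / (1 - p)) ^ (α - k) := by
    have e : (k : ℤ) - (α : ℤ) = -(((α - k : ℕ) : ℤ)) := by
      rw [Nat.cast_sub hkα]; ring
    rw [e, zpow_neg, zpow_natCast, one_div, inv_pow]
  rw [hRHS]
  by_cases hk0 : k = 0
  · subst hk0
    rw [show steinSol α p z 0 = 0 by rw [steinSol]; exact if_pos (Or.inl rfl), abs_zero]
    positivity
  · have hk : 1 ≤ k := Nat.one_le_iff_ne_zero.mpr hk0
    rw [steinSol, if_neg (by push_neg; exact ⟨hk0, hkα⟩)]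
    have hsplit : ∑ j ∈ Finset.Icc k α,
        ((α - k).factorial : ℝ) / ((α - j).factorial : ℝ) *
          (((k - 1).factorial : ℝ) / (j.factorial : ℝ)) *
            (p / (1 - p)) ^ (j - k) * (max ((j : ℝ) - z) 0 - binomCallExp α p z)
        = h1 α p z k - h2 α p z k := by
      rw [h1, h2, ← Finset.sum_sub_distrib]
      exact Finset.sum_congr rfl fun j _ => by ring
    rw [hsplit, abs_neg]
    have hb1 := h1_le α k hk hkα p z hp hp1 hz
    have hb2 := h2_le α k hα hk hkα p z hp hp1 hz
    have hn1 := h1_nonneg α k p z hp hp1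
    have hn2 := h2_nonneg α k p z hp hp1
    rw [abs_sub_le_iff]
    constructor <;> linarith
end

section
/- Let α be a positive integer, 0 < p = 1 - q < 1, z > 1 with z ≤ α, and let k satisfy 2 ≤ k < z. Then h₂(k) = ∑_{j=k}^{α} [(α-k)!/(α-j)!]·[(k-1)!/j!]·(p/q)^{j-k}·E[(B_{α,p}-z)^+] satisfies h₂(k) ≤ 2(q^{k-α} - 1)/(pz). -/
set_option maxHeartbeats 1000000


open Finset

section Aux

lemma fact_aux (k : ℕ) (hk : 2 ≤ k) : ∀ m : ℕ, (m+2).factorial * k.factorial ≤ 2 * (k+m).factorial := by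
  intro m
  induction m with
  | zero =>
      simp [Nat.factorial]
  | succ m ih =>
      have h1 : (m+3).factorial = (m+3) * (m+2).factorial := rfl
      have h2 : (k+(m+1)).factorial = (k+m+1) * (k+m).factorial := by
        have : k + (m+1) = (k+m)+1 := by omega
        rw [this]; rfl
      calc (m+1+2).factorial * k.factorial = (m+3) * ((m+2).factorial * k.factorial) := by
            rw [show m+1+2 = m+3 from rfl, h1]; ring
        _ ≤ (m+3) * (2 * (k+m).factorial) := Nat.mul_le_mul_left _ ih
        _ ≤ (k+m+1) * (2 * (k+m).factorial) := Nat.mul_le_mul_right _ (by omega)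
        _ = 2 * (k+(m+1)).factorial := by rw [h2]; ring

lemma W_aux (k i : ℕ) (hk : 2 ≤ k) (hi : 1 ≤ i) : i * (k+i) ≤ 2 * (k+i).choose k := by
  have hfac : (k+i).choose k * k.factorial * i.factorial = (k+i).factorial := by
    have := Nat.choose_mul_factorial_mul_factorial (show k ≤ k+i by omega)
    simpa [Nat.add_sub_cancel_left] using this
  have hpos : 0 < k.factorial * i.factorial := Nat.mul_pos k.factorial_pos i.factorial_pos
  refine Nat.le_of_mul_le_mul_right ?_ hpos
  have key : i * (k+i) * (k.factorial * i.factorial) ≤ 2 * (k+i).factorial := by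
    obtain ⟨m, rfl⟩ : ∃ m, i = m + 1 := ⟨i - 1, by omega⟩
    have h1 : (m+1) * (m+1).factorial ≤ (m+2).factorial := by
      have : (m+2).factorial = (m+2) * (m+1).factorial := rfl
      rw [this]; exact Nat.mul_le_mul_right _ (by omega)
    have h2 : (k+(m+1)).factorial = (k+(m+1)) * (k+m).factorial := by
      have : k + (m+1) = (k+m)+1 := by omega
      rw [this]; rfl
    calc (m+1) * (k+(m+1)) * (k.factorial * (m+1).factorial)
        = (k+(m+1)) * (((m+1) * (m+1).factorial) * k.factorial) := by ring
      _ ≤ (k+(m+1)) * ((m+2).factorial * k.factorial) :=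
          Nat.mul_le_mul_left _ (Nat.mul_le_mul_right _ h1)
      _ ≤ (k+(m+1)) * (2 * (k+m).factorial) :=
          Nat.mul_le_mul_left _ (fact_aux k hk m)
      _ = 2 * ((k+(m+1)) * (k+m).factorial) := by ring
      _ = 2 * (k+(m+1)).factorial := by rw [← h2]
  calc i * (k+i) * (k.factorial * i.factorial) ≤ 2 * (k+i).factorial := key
    _ = 2 * (k+i).choose k * (k.factorial * i.factorial) := by
        rw [← hfac]; ring

lemma chooseW (α k j : ℕ) (hk : 2 ≤ k) (hkj : k < j) (hjα : j ≤ α) :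
    α.choose j * (j * (j-k)) ≤ 2 * (α.choose k * (α-k).choose (j-k)) := by
  have hW : (j-k) * j ≤ 2 * j.choose k := by
    have := W_aux k (j-k) hk (by omega)
    have hkj' : k + (j-k) = j := by omega
    rw [hkj'] at this
    exact this
  have hid : α.choose j * j.choose k = α.choose k * (α-k).choose (j-k) :=
    Nat.choose_mul (n := α) (le_of_lt hkj)
  calc α.choose j * (j * (j-k)) = ((j-k) * j) * α.choose j := by ring
    _ ≤ (2 * j.choose k) * α.choose j := Nat.mul_le_mul_right _ hW
    _ = 2 * (α.choose j * j.choose k) := by ring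
    _ = 2 * (α.choose k * (α-k).choose (j-k)) := by rw [hid]

end Aux

/-- For `z > 1` with `z ≤ α`, and `2 ≤ k < z`,
`h₂(k) ≤ 2(q^{k-α} - 1)/(pz)`. -/
theorem h2_le_of_lt (α : ℕ) (hα : 0 < α) (p q : ℝ)
    (hq : q = 1 - p) (hp : 0 < p) (hp1 : p < 1) (z : ℝ) (hz : 1 < z) (hzα : z ≤ (α : ℝ))
    (k : ℕ) (hk : 2 ≤ k) (hkz : (k : ℝ) < z) :
    h2 α p z k ≤ 2 * (q ^ ((k : ℤ) - (α : ℤ)) - 1) / (p * z) := by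
  subst hq
  have hq0 : (0:ℝ) < 1 - p := by linarith
  have hz0 : (0:ℝ) < z := by linarith
  have hkα : k < α := by
    have : (k:ℝ) < (α:ℝ) := lt_of_lt_of_le hkz hzα
    exact_mod_cast this
  set n := α - k with hn
  have hn1 : 1 ≤ n := by omega
  -- the binomial weights
  set P : ℕ → ℝ := fun j => (α.choose j : ℝ) * p ^ j * (1 - p) ^ (α - j) with hP
  have hPnn : ∀ j, 0 ≤ P j := by
    intro j; rw [hP]; positivity
  have hPk : 0 < P k := by
    rw [hP]
    have : (0:ℝ) < (α.choose k : ℝ) := by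
      exact_mod_cast Nat.choose_pos (le_of_lt hkα)
    positivity
  have hkPk : 0 < (k:ℝ) * P k := by
    have : (0:ℝ) < (k:ℝ) := by exact_mod_cast (by omega : 0 < k)
    positivity
  -- binomial theorem : total mass = 1
  have hbin : ∀ N : ℕ, ∑ j ∈ Finset.range (N+1), (N.choose j : ℝ) * p ^ j * (1-p) ^ (N-j) = 1 := by
    intro N
    have h := add_pow p (1-p) N
    have h1 : p + (1-p) = 1 := by ring
    rw [h1, one_pow] at h
    conv_rhs => rw [h]
    exact Finset.sum_congr rfl (fun j _ => by ring)
  -- the coefficient sum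
  set c : ℝ := ∑ j ∈ Finset.Icc k α,
    ((α - k).factorial : ℝ) / ((α - j).factorial : ℝ) *
      (((k - 1).factorial : ℝ) / (j.factorial : ℝ)) * (p / (1 - p)) ^ (j - k) with hc
  have hcE : h2 α p z k = c * binomCallExp α p z := by
    rw [h2, hc, Finset.sum_mul]
  have hcnn : 0 ≤ c := by
    rw [hc]
    apply Finset.sum_nonneg
    intro j _
    positivity
  -- key identity: each coefficient times k * P k equals P j
  have hti : ∀ j ∈ Finset.Icc k α,
      ((α - k).factorial : ℝ) / ((α - j).factorial : ℝ) *
        (((k - 1).factorial : ℝ) / (j.factorial : ℝ)) * (p / (1 - p)) ^ (j - k)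
        * ((k:ℝ) * P k) = P j := by
    intro j hj
    obtain ⟨hkj, hjα⟩ := Finset.mem_Icc.mp hj
    have epq : (p/(1-p))^(j-k) * (p^k * (1-p)^(α-k)) = p^j * (1-p)^(α-j) := by
      have ep : p ^ j = p ^ (j - k) * p ^ k := by rw [← pow_add]; congr 1; omega
      have eq2 : (1-p) ^ (α - k) = (1-p) ^ (α - j) * (1-p) ^ (j - k) := by
        rw [← pow_add]; congr 1; omega
      rw [div_pow, ep, eq2]
      field_simp
    have enum : ((α - k).factorial : ℝ) / ((α - j).factorial : ℝ) *
        (((k - 1).factorial : ℝ) / (j.factorial : ℝ)) * ((k:ℝ) * (α.choose k : ℝ))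
        = (α.choose j : ℝ) := by
      have hNat : (α - k).factorial * (k - 1).factorial * (k * α.choose k) =
          α.choose j * ((α - j).factorial * j.factorial) := by
        have e1 : α.choose k * k.factorial * (α-k).factorial = α.factorial :=
          Nat.choose_mul_factorial_mul_factorial (le_of_lt hkα)
        have e2 : α.choose j * j.factorial * (α-j).factorial = α.factorial :=
          Nat.choose_mul_factorial_mul_factorial hjα
        have ek : k * (k-1).factorial = k.factorial := Nat.mul_factorial_pred (by omega)
        calc (α - k).factorial * (k - 1).factorial * (k * α.choose k)
            = (k * (k-1).factorial) * α.choose k * (α-k).factorial := by ring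
          _ = α.choose k * k.factorial * (α-k).factorial := by rw [ek]; ring
          _ = α.factorial := e1
          _ = α.choose j * j.factorial * (α-j).factorial := e2.symm
          _ = α.choose j * ((α - j).factorial * j.factorial) := by ring
      have hfj : ((α - j).factorial : ℝ) ≠ 0 := by
        exact_mod_cast (Nat.factorial_pos _).ne'
      have hfj2 : (j.factorial : ℝ) ≠ 0 := by
        exact_mod_cast (Nat.factorial_pos _).ne'
      field_simp
      have h' : (α - k).factorial * (k - 1).factorial * k * α.choose k =
          (α - j).factorial * j.factorial * α.choose j := by
        rw [mul_assoc _ k, hNat]; ring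
      exact_mod_cast h'
    calc ((α - k).factorial : ℝ) / ((α - j).factorial : ℝ) *
          (((k - 1).factorial : ℝ) / (j.factorial : ℝ)) * (p / (1 - p)) ^ (j - k)
          * ((k:ℝ) * P k)
        = (((α - k).factorial : ℝ) / ((α - j).factorial : ℝ) *
          (((k - 1).factorial : ℝ) / (j.factorial : ℝ)) * ((k:ℝ) * (α.choose k : ℝ))) *
          ((p/(1-p))^(j-k) * (p^k * (1-p)^(α-k))) := by rw [hP]; ring
      _ = (α.choose j : ℝ) * (p^j * (1-p)^(α-j)) := by rw [epq, enum]
      _ = P j := by rw [hP]; ring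
  -- c * (k * P k) ≤ 1
  have hck : c * ((k:ℝ) * P k) ≤ 1 := by
    rw [hc, Finset.sum_mul]
    rw [Finset.sum_congr rfl hti]
    calc ∑ j ∈ Finset.Icc k α, P j
        ≤ ∑ j ∈ Finset.range (α+1), P j := by
          apply Finset.sum_le_sum_of_subset_of_nonneg
          · intro j hj
            simp only [Finset.mem_Icc] at hj
            simp only [Finset.mem_range]
            omega
          · intro j _ _; exact hPnn j
      _ = 1 := hbin α
  have hcle : c ≤ 1 / ((k:ℝ) * P k) := by
    rw [le_div_iff₀ hkPk]
    exact hck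
  -- the quadratic-moment sum S
  set S : ℝ := ∑ j ∈ Finset.Icc (k+1) α, P j * ((j:ℝ) * ((j:ℝ) - (k:ℝ))) with hS
  have hSnn : 0 ≤ S := by
    rw [hS]
    apply Finset.sum_nonneg
    intro j hj
    obtain ⟨hkj, _⟩ := Finset.mem_Icc.mp hj
    have : (k:ℝ) + 1 ≤ (j:ℝ) := by exact_mod_cast hkj
    have h1 : (0:ℝ) ≤ (j:ℝ) * ((j:ℝ) - (k:ℝ)) := by nlinarith
    exact mul_nonneg (hPnn j) h1
  -- E ≤ S / z
  have hES : binomCallExp α p z ≤ S / z := by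
    have hsub : binomCallExp α p z = ∑ j ∈ Finset.Icc (k+1) α, P j * max ((j : ℝ) - z) 0 := by
      rw [binomCallExp]
      refine (Finset.sum_subset ?_ ?_).symm
      · intro j hj
        simp only [Finset.mem_Icc] at hj
        simp only [Finset.mem_range]
        omega
      · intro j hjr hjn
        simp only [Finset.mem_range] at hjr
        simp only [Finset.mem_Icc] at hjn
        have hjk : j ≤ k := by omega
        have hjz : (j:ℝ) ≤ z := by
          have : (j:ℝ) ≤ (k:ℝ) := by exact_mod_cast hjk
          linarith
        have hmax : max ((j : ℝ) - z) 0 = 0 := max_eq_right (by linarith)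
        rw [hmax, mul_zero]
    rw [hsub, hS, Finset.sum_div]
    apply Finset.sum_le_sum
    intro j hj
    obtain ⟨hkj, _⟩ := Finset.mem_Icc.mp hj
    have hjk : (k:ℝ) + 1 ≤ (j:ℝ) := by exact_mod_cast hkj
    have hmax : max ((j : ℝ) - z) 0 ≤ (j:ℝ) * ((j:ℝ) - (k:ℝ)) / z := by
      apply max_le
      · rw [le_div_iff₀ hz0]
        nlinarith [sq_nonneg ((j:ℝ) - z)]
      · apply div_nonneg _ (le_of_lt hz0)
        nlinarith
    calc P j * max ((j : ℝ) - z) 0 ≤ P j * ((j:ℝ) * ((j:ℝ) - (k:ℝ)) / z) :=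
          mul_le_mul_of_nonneg_left hmax (hPnn j)
      _ = P j * ((j:ℝ) * ((j:ℝ) - (k:ℝ))) / z := by ring
  -- S ≤ 2 * C(α,k) * p^k * (1 - (1-p)^n)
  have hSB : S ≤ 2 * (α.choose k : ℝ) * p^k * (1 - (1-p)^n) := by
    have hterm : ∀ j ∈ Finset.Icc (k+1) α,
        P j * ((j:ℝ) * ((j:ℝ) - (k:ℝ))) ≤
        2 * (α.choose k : ℝ) * p^k *
          ((n.choose (j-k) : ℝ) * p^(j-k) * (1-p)^(n-(j-k))) := by
      intro j hj
      obtain ⟨hkj, hjα⟩ := Finset.mem_Icc.mp hj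
      have hcast : (j:ℝ) * ((j:ℝ) - (k:ℝ)) = ((j * (j-k) : ℕ) : ℝ) := by
        push_cast [Nat.cast_sub (by omega : k ≤ j)]
        ring
      have hNat := chooseW α k j hk (by omega) hjα
      have hpowp : p ^ j = p ^ k * p ^ (j-k) := by rw [← pow_add]; congr 1; omega
      have hpowq : (1-p) ^ (α - j) = (1-p) ^ (n - (j-k)) := by congr 1; omega
      have hcastle : ((α.choose j * (j * (j-k)) : ℕ) : ℝ) ≤
          ((2 * (α.choose k * n.choose (j-k)) : ℕ) : ℝ) := by exact_mod_cast hNat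
      calc P j * ((j:ℝ) * ((j:ℝ) - (k:ℝ)))
          = ((α.choose j * (j * (j-k)) : ℕ) : ℝ) * (p^j * (1-p)^(α-j)) := by
            rw [hP, hcast]; push_cast; ring
        _ ≤ ((2 * (α.choose k * n.choose (j-k)) : ℕ) : ℝ) * (p^j * (1-p)^(α-j)) := by
            apply mul_le_mul_of_nonneg_right hcastle
            positivity
        _ = 2 * (α.choose k : ℝ) * p^k *
              ((n.choose (j-k) : ℝ) * p^(j-k) * (1-p)^(n-(j-k))) := by
            rw [hpowp, hpowq]; push_cast; ring
    have hsum : ∑ j ∈ Finset.Icc (k+1) α,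
        ((n.choose (j-k) : ℝ) * p^(j-k) * (1-p)^(n-(j-k))) = 1 - (1-p)^n := by
      have hIcc : Finset.Icc (k+1) α = Finset.Ico (k+1) (α+1) := by
        rw [Finset.Ico_add_one_right_eq_Icc]
      rw [hIcc, Finset.sum_Ico_eq_sum_range]
      have hlen : α + 1 - (k+1) = n := by omega
      rw [hlen]
      have hre : ∀ i ∈ Finset.range n,
          ((n.choose (k+1+i-k) : ℝ) * p^(k+1+i-k) * (1-p)^(n-(k+1+i-k))) =
          ((n.choose (i+1) : ℝ) * p^(i+1) * (1-p)^(n-(i+1))) := by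
        intro i _
        have : k+1+i-k = i+1 := by omega
        rw [this]
      rw [Finset.sum_congr rfl hre]
      have hb := hbin n
      rw [Finset.sum_range_succ'] at hb
      have h0 : (n.choose 0 : ℝ) * p ^ 0 * (1-p) ^ (n-0) = (1-p)^n := by simp
      rw [h0] at hb
      linarith
    calc S ≤ ∑ j ∈ Finset.Icc (k+1) α,
          2 * (α.choose k : ℝ) * p^k *
            ((n.choose (j-k) : ℝ) * p^(j-k) * (1-p)^(n-(j-k))) := by
          rw [hS]; exact Finset.sum_le_sum hterm
      _ = 2 * (α.choose k : ℝ) * p^k * ∑ j ∈ Finset.Icc (k+1) α,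
            ((n.choose (j-k) : ℝ) * p^(j-k) * (1-p)^(n-(j-k))) := by
          rw [Finset.mul_sum]
      _ = 2 * (α.choose k : ℝ) * p^k * (1 - (1-p)^n) := by rw [hsum]
  -- assemble
  have hEnn : 0 ≤ binomCallExp α p z := by
    rw [binomCallExp]
    apply Finset.sum_nonneg
    intro j _
    have : (0:ℝ) ≤ max ((j : ℝ) - z) 0 := le_max_right _ _
    positivity
  have hstep1 : h2 α p z k ≤ (1 / ((k:ℝ) * P k)) * (S / z) := by
    rw [hcE]
    calc c * binomCallExp α p z ≤ c * (S / z) :=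
          mul_le_mul_of_nonneg_left hES hcnn
      _ ≤ (1 / ((k:ℝ) * P k)) * (S / z) := by
          apply mul_le_mul_of_nonneg_right hcle
          exact div_nonneg hSnn (le_of_lt hz0)
  have hstep2 : (1 / ((k:ℝ) * P k)) * (S / z) ≤
      (1 / ((k:ℝ) * P k)) * ((2 * (α.choose k : ℝ) * p^k * (1 - (1-p)^n)) / z) := by
    have hdz : S / z ≤ (2 * (α.choose k : ℝ) * p^k * (1 - (1-p)^n)) / z :=
      (div_le_div_iff_of_pos_right hz0).mpr hSB
    have hnn : (0:ℝ) ≤ 1 / ((k:ℝ) * P k) := by positivity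
    exact mul_le_mul_of_nonneg_left hdz hnn
  have hzpow : (1-p) ^ ((k:ℤ) - (α:ℤ)) = ((1-p)^n)⁻¹ := by
    have hnz : (n:ℤ) = (α:ℤ) - (k:ℤ) := by
      rw [hn]; push_cast [Nat.cast_sub (le_of_lt hkα)]; ring
    have he : (k:ℤ) - (α:ℤ) = -(n:ℤ) := by omega
    rw [he, zpow_neg, zpow_natCast]
  have hq1 : (0:ℝ) < (1-p)^n := pow_pos hq0 n
  have hq1le : (1-p)^n ≤ 1 := pow_le_one₀ (by linarith) (by linarith)
  have hPkval : P k = (α.choose k : ℝ) * p^k * (1-p)^n := by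
    simp only [hP]
    rfl
  have hck0 : (α.choose k:ℝ) ≠ 0 := by
    have : (0:ℝ) < (α.choose k : ℝ) := by exact_mod_cast Nat.choose_pos (le_of_lt hkα)
    exact ne_of_gt this
  have hfin : (1 / ((k:ℝ) * P k)) * ((2 * (α.choose k : ℝ) * p^k * (1 - (1-p)^n)) / z)
      ≤ 2 * ((1-p) ^ ((k:ℤ) - (α:ℤ)) - 1) / (p * z) := by
    rw [hzpow]
    have hk0 : (0:ℝ) < (k:ℝ) := by exact_mod_cast (by omega : 0 < k)
    have hL : (1 / ((k:ℝ) * P k)) * ((2 * (α.choose k : ℝ) * p^k * (1 - (1-p)^n)) / z)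
        = 2 * (1 - (1-p)^n) / ((k:ℝ) * ((1-p)^n * z)) := by
      rw [hPkval]
      field_simp
    have hqne : ((1-p)^n) ≠ 0 := ne_of_gt hq1
    have hR : 2 * (((1-p)^n)⁻¹ - 1) / (p * z) = 2 * (1 - (1-p)^n) / (p * ((1-p)^n * z)) := by
      rw [div_eq_div_iff (by positivity) (by positivity)]
      field_simp
    rw [hL, hR]
    have h1 : (0:ℝ) ≤ 2 * (1 - (1-p)^n) := by nlinarith
    have pos1 : (0:ℝ) < (k:ℝ) * ((1-p)^n * z) := mul_pos hk0 (mul_pos hq1 hz0)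
    have pos2 : (0:ℝ) < p * ((1-p)^n * z) := mul_pos hp (mul_pos hq1 hz0)
    rw [div_le_div_iff₀ pos1 pos2]
    have h3 : p * ((1-p)^n*z) ≤ (k:ℝ) * ((1-p)^n*z) := by
      apply mul_le_mul_of_nonneg_right _ (le_of_lt (mul_pos hq1 hz0))
      have : (2:ℝ) ≤ (k:ℝ) := by exact_mod_cast hk
      linarith
    exact mul_le_mul_of_nonneg_left h3 h1
  calc h2 α p z k ≤ (1 / ((k:ℝ) * P k)) * (S / z) := hstep1
    _ ≤ (1 / ((k:ℝ) * P k)) * ((2 * (α.choose k : ℝ) * p^k * (1 - (1-p)^n)) / z) := hstep2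
    _ ≤ 2 * ((1-p) ^ ((k:ℤ) - (α:ℤ)) - 1) / (p * z) := hfin
end
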